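/- Let X₀ be an ℝ^d-valued random variable with E[exp(‖X₀‖²/V²)] ≤ K, and let ε ∼ N(0, I_d) be independent of X₀. For t > 0 set μ_t = e^{-t}, σ_t = √(1 - e^{-2t}), and X_t = μ_t X₀ + σ_t ε. Then E[exp(‖X_t‖²/(2μ_t²V² + 8σ_t²))] ≤ 2^d · K, and consequently P(‖X_t‖ ≥ ξ) ≤ 2^d K exp(-ξ²/(2μ_t²V² + 8σ_t²)) for all ξ > 0. -/

import Mathlib

open MeasureTheory Real ProbabilityTheory

lemma integrable_rexp_neg_mul_sq_norm' {V : Type*} [NormedAddCommGroup V]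
    [InnerProductSpace ℝ V] [FiniteDimensional ℝ V] [MeasurableSpace V] [BorelSpace V]
    {b : ℝ} (hb : 0 < b) : Integrable (fun v : V => rexp (-b * ‖v‖ ^ 2)) := by
  have h := (GaussianFourier.integrable_cexp_neg_mul_sq_norm_add (V := V) (b := (b : ℂ))
    (by simpa using hb) 0 0).norm
  refine h.congr ?_
  filter_upwards with v
  simp [Complex.norm_exp]
  left
  norm_cast

lemma gauss_density_eq (d : ℕ) (x : EuclideanSpace ℝ (Fin d)) :
    ((2 * π) ^ (-(d : ℝ) / 2) * rexp (-‖x‖ ^ 2 / 2)) * rexp (‖x‖ ^ 2 / 4)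
      = (2 * π) ^ (-(d : ℝ) / 2) * rexp (-(4⁻¹) * ‖x‖ ^ 2) := by
  rw [mul_assoc, ← Real.exp_add]
  ring_nf

lemma gauss_moment (d : ℕ) :
    Integrable (fun x : EuclideanSpace ℝ (Fin d) => rexp (‖x‖ ^ 2 / 4))
      (MeasureTheory.volume.withDensity (fun x =>
        ENNReal.ofReal ((2 * Real.pi) ^ (-(d : ℝ) / 2) * Real.exp (-‖x‖ ^ 2 / 2)))) ∧
    ∫ x : EuclideanSpace ℝ (Fin d), rexp (‖x‖ ^ 2 / 4)
      ∂(MeasureTheory.volume.withDensity (fun x =>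
        ENNReal.ofReal ((2 * Real.pi) ^ (-(d : ℝ) / 2) * Real.exp (-‖x‖ ^ 2 / 2))))
      ≤ 2 ^ d := by
  set ρ : EuclideanSpace ℝ (Fin d) → ℝ :=
    fun x => (2 * π) ^ (-(d : ℝ) / 2) * rexp (-‖x‖ ^ 2 / 2) with hρ
  have hρ0 : ∀ x, 0 ≤ ρ x := fun x => by positivity
  have hρc : Continuous ρ := by
    apply Continuous.mul continuous_const
    exact Real.continuous_exp.comp (by continuity)
  have hρm : Measurable fun x => (ρ x).toNNReal := hρc.measurable.real_toNNReal
  have hkey : ∀ x : EuclideanSpace ℝ (Fin d),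
      (ρ x).toNNReal • rexp (‖x‖ ^ 2 / 4) = (2 * π) ^ (-(d : ℝ) / 2) * rexp (-(4⁻¹) * ‖x‖ ^ 2) := by
    intro x
    rw [NNReal.smul_def, smul_eq_mul, Real.coe_toNNReal _ (hρ0 x), hρ, gauss_density_eq]
  have hint : Integrable
      (fun x : EuclideanSpace ℝ (Fin d) => (2 * π) ^ (-(d : ℝ) / 2) * rexp (-(4⁻¹) * ‖x‖ ^ 2)) :=
    (integrable_rexp_neg_mul_sq_norm' (by norm_num : (0:ℝ) < 4⁻¹)).const_mul _
  have hwd : (MeasureTheory.volume.withDensity (fun x : EuclideanSpace ℝ (Fin d) =>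
        ENNReal.ofReal ((2 * Real.pi) ^ (-(d : ℝ) / 2) * Real.exp (-‖x‖ ^ 2 / 2))))
      = MeasureTheory.volume.withDensity (fun x => ((ρ x).toNNReal : ENNReal)) := rfl
  have hint2 : Integrable (fun x : EuclideanSpace ℝ (Fin d) => rexp (‖x‖ ^ 2 / 4))
      (MeasureTheory.volume.withDensity (fun x => ((ρ x).toNNReal : ENNReal))) := by
    rw [integrable_withDensity_iff_integrable_smul hρm]
    exact hint.congr (by filter_upwards with x using (hkey x).symm)
  constructor
  · rw [hwd]; exact hint2
  rw [hwd, integral_withDensity_eq_integral_smul hρm]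
  simp_rw [hkey]
  rw [integral_const_mul, GaussianFourier.integral_rexp_neg_mul_sq_norm (by norm_num : (0:ℝ) < 4⁻¹),
    finrank_euclideanSpace_fin]
  have h2π : (0:ℝ) < 2 * π := by positivity
  have : (2 * π) ^ (-(d : ℝ) / 2) * (π / 4⁻¹) ^ ((d : ℝ) / 2) = 2 ^ ((d:ℝ) / 2) := by
    have hπ := Real.pi_ne_zero
    rw [neg_div, Real.rpow_neg h2π.le, inv_mul_eq_div, ← Real.div_rpow (by positivity) h2π.le]
    congr 1
    field_simp
    ring
  rw [this]
  calc (2:ℝ) ^ ((d:ℝ)/2) ≤ 2 ^ (d:ℝ) :=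
        Real.rpow_le_rpow_of_exponent_le one_le_two
          (by have : (0:ℝ) ≤ (d:ℝ) := Nat.cast_nonneg d; linarith)
    _ = 2 ^ d := Real.rpow_natCast 2 d

set_option maxHeartbeats 1000000 in
/-- Sub-Gaussianity of the Ornstein–Uhlenbeck forward process: if `X₀` has
`E[exp(‖X₀‖²/V²)] ≤ K` and `ε ∼ N(0, I_d)` is independent of `X₀`, then
`X_t = μ_t X₀ + σ_t ε` (with `μ_t = e^{-t}`, `σ_t = √(1 - e^{-2t})`) satisfies
`E[exp(‖X_t‖²/(2μ_t²V² + 8σ_t²))] ≤ 2^d K` and consequently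
`P(‖X_t‖ ≥ ξ) ≤ 2^d K exp(-ξ²/(2μ_t²V² + 8σ_t²))` for all `ξ > 0`. -/
theorem ou_subGaussian {Ω : Type*} [MeasurableSpace Ω]
    (P : Measure Ω) [IsProbabilityMeasure P]
    (d : ℕ) (X₀ ε : Ω → EuclideanSpace ℝ (Fin d))
    (hX₀ : Measurable X₀) (hε : Measurable ε)
    (V K : ℝ) (hV : 0 < V) (hK : 0 < K)
    (hSG : ∫ ω, Real.exp (‖X₀ ω‖ ^ 2 / V ^ 2) ∂P ≤ K)
    (hSGint : Integrable (fun ω => Real.exp (‖X₀ ω‖ ^ 2 / V ^ 2)) P)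
    (hlaw : Measure.map ε P =
      MeasureTheory.volume.withDensity (fun x =>
        ENNReal.ofReal ((2 * Real.pi) ^ (-(d : ℝ) / 2) * Real.exp (-‖x‖ ^ 2 / 2))))
    (hindep : IndepFun X₀ ε P)
    (t : ℝ) (ht : 0 < t) :
    (∫ ω, Real.exp
        (‖Real.exp (-t) • X₀ ω + Real.sqrt (1 - Real.exp (-2 * t)) • ε ω‖ ^ 2 /
          (2 * Real.exp (-t) ^ 2 * V ^ 2 + 8 * (1 - Real.exp (-2 * t)))) ∂P
      ≤ 2 ^ d * K) ∧
    ∀ ξ > (0 : ℝ),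
      (P {ω | ξ ≤ ‖Real.exp (-t) • X₀ ω + Real.sqrt (1 - Real.exp (-2 * t)) • ε ω‖}).toReal
        ≤ 2 ^ d * K *
          Real.exp (-ξ ^ 2 / (2 * Real.exp (-t) ^ 2 * V ^ 2 + 8 * (1 - Real.exp (-2 * t)))) := by
  have hμpos : 0 < Real.exp (-t) := Real.exp_pos _
  have hs2 : 0 < 1 - Real.exp (-2 * t) := by
    have : Real.exp (-2 * t) < 1 := Real.exp_lt_one_iff.mpr (by linarith)
    linarith
  set μt := Real.exp (-t) with hμt
  set s2 := 1 - Real.exp (-2 * t) with hs2def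
  set σt := Real.sqrt s2 with hσt
  set D := 2 * μt ^ 2 * V ^ 2 + 8 * s2 with hD
  have hσsq : σt ^ 2 = s2 := Real.sq_sqrt hs2.le
  have hσ0 : 0 ≤ σt := Real.sqrt_nonneg _
  have hDpos : 0 < D := by
    have h1 : 0 < 2 * μt ^ 2 * V ^ 2 := by positivity
    have h2 : 0 < 8 * s2 := by linarith
    rw [hD]; linarith
  set lam := 2 * μt ^ 2 * V ^ 2 / D with hlam
  set lam' := 8 * s2 / D with hlam'
  have hlam0 : 0 ≤ lam := by positivity
  have hlam'0 : 0 ≤ lam' := by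
    have : 0 ≤ 8 * s2 := by linarith
    positivity
  have hsum : lam + lam' = 1 := by
    rw [hlam, hlam', ← add_div, hD, div_self hDpos.ne']
  -- pointwise bound
  set Xt : Ω → EuclideanSpace ℝ (Fin d) := fun ω => μt • X₀ ω + σt • ε ω with hXt
  have hpt : ∀ ω, ‖Xt ω‖ ^ 2 / D
      ≤ lam * (‖X₀ ω‖ ^ 2 / V ^ 2) + lam' * (‖ε ω‖ ^ 2 / 4) := by
    intro ω
    have h1 : ‖Xt ω‖ ≤ μt * ‖X₀ ω‖ + σt * ‖ε ω‖ := by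
      refine (norm_add_le _ _).trans ?_
      rw [norm_smul, norm_smul, Real.norm_eq_abs, Real.norm_eq_abs,
        abs_of_pos hμpos, abs_of_nonneg hσ0]
    have h2 : ‖Xt ω‖ ^ 2 ≤ (μt * ‖X₀ ω‖ + σt * ‖ε ω‖) ^ 2 :=
      pow_le_pow_left₀ (norm_nonneg _) h1 2
    have h3 : (μt * ‖X₀ ω‖ + σt * ‖ε ω‖) ^ 2
        ≤ 2 * μt ^ 2 * ‖X₀ ω‖ ^ 2 + 2 * s2 * ‖ε ω‖ ^ 2 := by
      nlinarith [sq_nonneg (μt * ‖X₀ ω‖ - σt * ‖ε ω‖), hσsq]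
    have heq : lam * (‖X₀ ω‖ ^ 2 / V ^ 2) + lam' * (‖ε ω‖ ^ 2 / 4)
        = (2 * μt ^ 2 * ‖X₀ ω‖ ^ 2 + 2 * s2 * ‖ε ω‖ ^ 2) / D := by
      rw [hlam, hlam']
      field_simp
      ring
    rw [heq]
    exact (div_le_div_iff_of_pos_right hDpos).mpr (h2.trans h3)
  have hf_le : ∀ ω, Real.exp (‖Xt ω‖ ^ 2 / D)
      ≤ lam * Real.exp (‖X₀ ω‖ ^ 2 / V ^ 2) + lam' * Real.exp (‖ε ω‖ ^ 2 / 4) := by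
    intro ω
    refine (Real.exp_le_exp.mpr (hpt ω)).trans ?_
    have := convexOn_exp.2 (Set.mem_univ (‖X₀ ω‖ ^ 2 / V ^ 2))
      (Set.mem_univ (‖ε ω‖ ^ 2 / 4)) hlam0 hlam'0 hsum
    simpa [smul_eq_mul] using this
  -- gaussian moment of ε
  have hmeasg : AEStronglyMeasurable (fun x : EuclideanSpace ℝ (Fin d) =>
      Real.exp (‖x‖ ^ 2 / 4)) (Measure.map ε P) :=
    (Real.continuous_exp.comp (by continuity)).aestronglyMeasurable
  have hεint : Integrable (fun ω => Real.exp (‖ε ω‖ ^ 2 / 4)) P := by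
    have h := (gauss_moment d).1
    rw [← hlaw] at h
    exact (integrable_map_measure hmeasg hε.aemeasurable).mp h
  have hεval : ∫ ω, Real.exp (‖ε ω‖ ^ 2 / 4) ∂P ≤ 2 ^ d := by
    have h := integral_map hε.aemeasurable hmeasg
    rw [hlaw] at h
    rw [← h]
    exact (gauss_moment d).2
  -- measurability of f
  have hXtm : Measurable Xt := (hX₀.const_smul μt).add (hε.const_smul σt)
  have hfm : Measurable fun ω => Real.exp (‖Xt ω‖ ^ 2 / D) :=
    Real.measurable_exp.comp ((hXtm.norm.pow_const 2).div_const D)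
  -- integrability of g and f
  have hg_int : Integrable (fun ω => lam * Real.exp (‖X₀ ω‖ ^ 2 / V ^ 2)
      + lam' * Real.exp (‖ε ω‖ ^ 2 / 4)) P :=
    (hSGint.const_mul lam).add (hεint.const_mul lam')
  have hf_int : Integrable (fun ω => Real.exp (‖Xt ω‖ ^ 2 / D)) P := by
    refine hg_int.mono' hfm.aestronglyMeasurable (ae_of_all _ fun ω => ?_)
    rw [Real.norm_eq_abs, abs_of_pos (Real.exp_pos _)]
    exact hf_le ω
  have hK1 : (1 : ℝ) ≤ K := by
    refine le_trans ?_ hSG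
    have h := integral_mono (integrable_const (1 : ℝ)) hSGint
      (fun ω => Real.one_le_exp (by positivity))
    simpa using h
  have h2d : (1 : ℝ) ≤ 2 ^ d := one_le_pow₀ (by norm_num : (1:ℝ) ≤ 2)
  -- main integral bound
  have hmain : ∫ ω, Real.exp (‖Xt ω‖ ^ 2 / D) ∂P ≤ 2 ^ d * K := by
    have h1 : ∫ ω, Real.exp (‖Xt ω‖ ^ 2 / D) ∂P
        ≤ ∫ ω, (lam * Real.exp (‖X₀ ω‖ ^ 2 / V ^ 2)
            + lam' * Real.exp (‖ε ω‖ ^ 2 / 4)) ∂P :=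
      integral_mono hf_int hg_int hf_le
    have h2 : ∫ ω, (lam * Real.exp (‖X₀ ω‖ ^ 2 / V ^ 2)
        + lam' * Real.exp (‖ε ω‖ ^ 2 / 4)) ∂P
        = lam * ∫ ω, Real.exp (‖X₀ ω‖ ^ 2 / V ^ 2) ∂P
          + lam' * ∫ ω, Real.exp (‖ε ω‖ ^ 2 / 4) ∂P := by
      rw [integral_add (hSGint.const_mul lam) (hεint.const_mul lam'),
        integral_const_mul, integral_const_mul]
    refine h1.trans ?_
    rw [h2]
    have hb1 : lam * ∫ ω, Real.exp (‖X₀ ω‖ ^ 2 / V ^ 2) ∂P ≤ lam * (2 ^ d * K) :=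
      mul_le_mul_of_nonneg_left (hSG.trans (le_mul_of_one_le_left hK.le h2d)) hlam0
    have hb2 : lam' * ∫ ω, Real.exp (‖ε ω‖ ^ 2 / 4) ∂P ≤ lam' * (2 ^ d * K) :=
      mul_le_mul_of_nonneg_left (hεval.trans (le_mul_of_one_le_right (by positivity) hK1)) hlam'0
    calc lam * ∫ ω, Real.exp (‖X₀ ω‖ ^ 2 / V ^ 2) ∂P + lam' * ∫ ω, Real.exp (‖ε ω‖ ^ 2 / 4) ∂P
        ≤ lam * (2 ^ d * K) + lam' * (2 ^ d * K) := add_le_add hb1 hb2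
      _ = 2 ^ d * K := by rw [← add_mul, hsum, one_mul]
  refine ⟨hmain, fun ξ hξ => ?_⟩
  -- Markov
  have hsub : {ω | ξ ≤ ‖Xt ω‖}
      ⊆ {ω | Real.exp (ξ ^ 2 / D) ≤ Real.exp (‖Xt ω‖ ^ 2 / D)} := by
    intro ω hω
    have h1 : ξ ^ 2 ≤ ‖Xt ω‖ ^ 2 := pow_le_pow_left₀ hξ.le hω 2
    exact Real.exp_le_exp.mpr ((div_le_div_iff_of_pos_right hDpos).mpr h1)
  have hmarkov := mul_meas_ge_le_integral_of_nonneg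
    (ae_of_all P fun ω => (Real.exp_pos (‖Xt ω‖ ^ 2 / D)).le) hf_int (Real.exp (ξ ^ 2 / D))
  have hPB : (P {ω | ξ ≤ ‖Xt ω‖}).toReal
      ≤ (P {ω | Real.exp (ξ ^ 2 / D) ≤ Real.exp (‖Xt ω‖ ^ 2 / D)}).toReal :=
    ENNReal.toReal_mono (measure_ne_top P _) (measure_mono hsub)
  have hexp : 0 < Real.exp (ξ ^ 2 / D) := Real.exp_pos _
  have hPB2 : (P {ω | Real.exp (ξ ^ 2 / D) ≤ Real.exp (‖Xt ω‖ ^ 2 / D)}).toReal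
      ≤ (2 ^ d * K) * (Real.exp (ξ ^ 2 / D))⁻¹ := by
    rw [← div_eq_mul_inv, le_div_iff₀ hexp, mul_comm]
    exact hmarkov.trans hmain
  have hfin : Real.exp (-ξ ^ 2 / D) = (Real.exp (ξ ^ 2 / D))⁻¹ := by
    rw [neg_div, Real.exp_neg]
  rw [hfin]
  exact hPB.trans hPB2
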